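/- The cofinality of the set of all functions from ℝ to ℕ ordered by everywhere domination equals 2^(2^ℵ₀). -/

import Mathlib

open Cardinal Order

/-- The cofinality of the everywhere (pointwise) domination order on functions `X → K`. -/
noncomputable def everyCof (X K : Type*) [LE K] : Cardinal :=
  sInf {c | ∃ D : Set (X → K), #D = c ∧ ∀ f : X → K, ∃ g ∈ D, ∀ x, f x ≤ g x}

/-- The cofinality of the eventual domination order on functions `X → K`. -/
noncomputable def evenCof (X K : Type*) [LE X] [LE K] : Cardinal :=
  sInf {c | ∃ D : Set (X → K), #D = c ∧
    ∀ f : X → K, ∃ g ∈ D, ∃ a : X, ∀ b : X, a ≤ b → f b ≤ g b}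

namespace Stmt11Aux

/-- Largeness of a finite branch: more than continuum many sets in `S` contain all its points. -/
def lgP (S : Set (Set ℝ)) (l : List ℝ) : Prop :=
  ¬ #{A ∈ S | ∀ y ∈ l, y ∈ A} ≤ 𝔠

lemma step_ex (S : Set (Set ℝ)) (l : List ℝ) (hl : lgP S l) :
    ∃ α : ℝ, lgP S (l ++ [α]) ∧ ∃ A ∈ S, (∀ y ∈ l, y ∈ A) ∧ α ∉ A := by
  by_contra hno
  push_neg at hno
  apply hl
  set G : Set ℝ := {α | lgP S (l ++ [α])} with hG
  have cover : {A ∈ S | ∀ y ∈ l, y ∈ A} ⊆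
      {G} ∪ ⋃ α : ℝ, {A ∈ S | (∀ y ∈ l, y ∈ A) ∧ α ∈ A ∧ α ∉ G} := by
    intro A hA
    by_cases hAG : A ⊆ G
    · have hGA : G ⊆ A := fun α hα => hno α hα A hA.1 hA.2
      left
      simp [Set.Subset.antisymm hAG hGA]
    · right
      obtain ⟨α, hαA, hαG⟩ := Set.not_subset.mp hAG
      exact Set.mem_iUnion.mpr ⟨α, hA.1, hA.2, hαA, hαG⟩
  have hpiece : ∀ α : ℝ, #{A ∈ S | (∀ y ∈ l, y ∈ A) ∧ α ∈ A ∧ α ∉ G} ≤ 𝔠 := by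
    intro α
    by_cases hα : α ∈ G
    · have hempty : {A ∈ S | (∀ y ∈ l, y ∈ A) ∧ α ∈ A ∧ α ∉ G} = ∅ := by
        ext A; simp [hα]
      simp [hempty]
    · have hsub : {A ∈ S | (∀ y ∈ l, y ∈ A) ∧ α ∈ A ∧ α ∉ G} ⊆
          {A ∈ S | ∀ y ∈ l ++ [α], y ∈ A} := by
        intro A hA
        refine ⟨hA.1, fun y hy => ?_⟩
        rcases List.mem_append.mp hy with h | h
        · exact hA.2.1 y h
        · rw [List.mem_singleton.mp h]; exact hA.2.2.1
      have hαsmall : #{A ∈ S | ∀ y ∈ l ++ [α], y ∈ A} ≤ 𝔠 := by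
        have : ¬ lgP S (l ++ [α]) := hα
        exact not_not.mp this
      exact (Cardinal.mk_le_mk_of_subset hsub).trans hαsmall
  have hsup : ⨆ α : ℝ, #{A ∈ S | (∀ y ∈ l, y ∈ A) ∧ α ∈ A ∧ α ∉ G} ≤ 𝔠 :=
    ciSup_le' hpiece
  calc #{A ∈ S | ∀ y ∈ l, y ∈ A}
      ≤ #(({G} ∪ (⋃ α : ℝ, {A ∈ S | (∀ y ∈ l, y ∈ A) ∧ α ∈ A ∧ α ∉ G}) : Set (Set ℝ))) :=
        Cardinal.mk_le_mk_of_subset cover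
    _ ≤ #({G} : Set (Set ℝ)) +
          #(⋃ α : ℝ, {A ∈ S | (∀ y ∈ l, y ∈ A) ∧ α ∈ A ∧ α ∉ G}) :=
        Cardinal.mk_union_le _ _
    _ ≤ 1 + #ℝ * ⨆ α : ℝ, #{A ∈ S | (∀ y ∈ l, y ∈ A) ∧ α ∈ A ∧ α ∉ G} := by
        refine add_le_add (le_of_eq (Cardinal.mk_singleton _)) (Cardinal.mk_iUnion_le _)
    _ ≤ 1 + 𝔠 * 𝔠 := by
        rw [Cardinal.mk_real]
        exact add_le_add_right (mul_le_mul_right hsup _) _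
    _ ≤ 𝔠 := by
        rw [Cardinal.mul_eq_self Cardinal.aleph0_le_continuum,
          Cardinal.add_eq_right Cardinal.aleph0_le_continuum
            (le_trans Cardinal.one_le_aleph0 Cardinal.aleph0_le_continuum)]

/-- Any single `g` everywhere-dominates at most continuum many of the functions `F_A`. -/
lemma domfam_small (e : ℝ ≃ (ℕ → ℝ)) (g : ℝ → ℕ) :
    #{A : Set ℝ | ∀ x : ℝ, sInf {n : ℕ | e x n ∉ A} ≤ g x} ≤ 𝔠 := by
  by_contra hbig
  set S : Set (Set ℝ) := {A : Set ℝ | ∀ x : ℝ, sInf {n : ℕ | e x n ∉ A} ≤ g x} with hS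
  have h0 : lgP S [] := by
    unfold lgP
    have : {A ∈ S | ∀ y ∈ ([] : List ℝ), y ∈ A} = S := by ext A; simp
    rw [this]; exact hbig
  have hC := step_ex S
  choose next hlgnext B hBS hBl hBnot using hC
  let T : ℕ → {t : List ℝ // lgP S t} := fun n =>
    Nat.rec ⟨[], h0⟩ (fun _ p => ⟨p.1 ++ [next p.1 p.2], hlgnext p.1 p.2⟩) n
  have hTsucc : ∀ n : ℕ, (T (n + 1)).1 = (T n).1 ++ [next (T n).1 (T n).2] := fun n => rfl
  let s : ℕ → ℝ := fun n => next (T n).1 (T n).2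
  have hmem : ∀ n k, k < n → s k ∈ (T n).1 := by
    intro n
    induction n with
    | zero => intro k hk; exact absurd hk (Nat.not_lt_zero k)
    | succ n ih =>
      intro k hk
      rw [hTsucc n]
      rcases Nat.lt_succ_iff_lt_or_eq.mp hk with h | h
      · exact List.mem_append_left _ (ih k h)
      · subst h; exact List.mem_append_right _ (List.mem_singleton_self _)
  set x₀ : ℝ := e.symm s with hx₀
  have he : e x₀ = s := e.apply_symm_apply s
  have hbound : ∀ n : ℕ, n ≤ g x₀ := by
    intro n
    have hBn : B (T n).1 (T n).2 ∈ S := hBS _ _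
    have hn : sInf {k : ℕ | e x₀ k ∉ B (T n).1 (T n).2} ≤ g x₀ := hBn x₀
    refine le_trans ?_ hn
    apply le_csInf
    · exact ⟨n, by rw [he]; exact hBnot _ _⟩
    · intro m hm
      by_contra hmn
      push_neg at hmn
      apply hm
      rw [he]
      exact hBl (T n).1 (T n).2 (s m) (hmem n m hmn)
  exact absurd (hbound (g x₀ + 1)) (by omega)

end Stmt11Aux

theorem two_two_aleph0 : (2 : Cardinal) ^ ((2 : Cardinal) ^ (ℵ₀ : Cardinal)) = 2 ^ 𝔠 := by
  rw [Cardinal.two_power_aleph0]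

theorem stmt_11 : everyCof ℝ ℕ = (2 : Cardinal) ^ ((2 : Cardinal) ^ (ℵ₀ : Cardinal)) := by
  unfold everyCof
  have h1 : #(ℕ → ℝ) = #ℝ := by
    rw [← Cardinal.power_def, Cardinal.mk_real, Cardinal.mk_nat,
      Cardinal.continuum_power_aleph0]
  obtain ⟨e⟩ := Cardinal.eq.mp h1.symm
  have hval : #(Set.univ : Set (ℝ → ℕ)) = (2 : Cardinal) ^ ((2 : Cardinal) ^ (ℵ₀ : Cardinal)) := by
    rw [Cardinal.mk_univ, ← Cardinal.power_def, Cardinal.mk_real, Cardinal.mk_nat,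
      Cardinal.two_power_aleph0]
    apply le_antisymm
    · calc (ℵ₀ : Cardinal) ^ 𝔠 ≤ 𝔠 ^ 𝔠 :=
            Cardinal.power_le_power_right Cardinal.aleph0_le_continuum
        _ = ((2 : Cardinal) ^ (ℵ₀ : Cardinal)) ^ 𝔠 := by rw [Cardinal.two_power_aleph0]
        _ = (2 : Cardinal) ^ ((ℵ₀ : Cardinal) * 𝔠) := (Cardinal.power_mul).symm
        _ = (2 : Cardinal) ^ 𝔠 := by
            rw [Cardinal.mul_eq_right Cardinal.aleph0_le_continuum Cardinal.aleph0_le_continuum Cardinal.aleph0_ne_zero]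
    · exact Cardinal.power_le_power_right (by exact_mod_cast Cardinal.nat_lt_aleph0 2 |>.le)
  have hmem : (2 : Cardinal) ^ ((2 : Cardinal) ^ (ℵ₀ : Cardinal)) ∈
      {c | ∃ D : Set (ℝ → ℕ), #D = c ∧ ∀ f : ℝ → ℕ, ∃ g ∈ D, ∀ x, f x ≤ g x} :=
    ⟨Set.univ, hval, fun f => ⟨f, Set.mem_univ f, fun _ => le_rfl⟩⟩
  apply le_antisymm
  · exact csInf_le' hmem
  · refine le_csInf ⟨_, hmem⟩ ?_
    rintro c ⟨D, rfl, hdom⟩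
    rw [two_two_aleph0]
    choose φ hφD hφ using fun A : Set ℝ => hdom (fun x => sInf {n : ℕ | e x n ∉ A})
    let ψ : Set ℝ → D := fun A => ⟨φ A, hφD A⟩
    have hfib : ∀ gd : D, #{A : Set ℝ | ψ A = gd} ≤ 𝔠 := by
      intro gd
      refine (Cardinal.mk_le_mk_of_subset ?_).trans (Stmt11Aux.domfam_small e gd.1)
      intro A hA x
      have hAg : φ A = gd.1 := congrArg Subtype.val hA
      rw [← hAg]
      exact hφ A x
    have hcount : #(Set ℝ) ≤ #D * 𝔠 := by
      have e2 : #(Set ℝ) = #(Σ gd : D, {A : Set ℝ // ψ A = gd}) :=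
        (Cardinal.mk_congr (Equiv.sigmaFiberEquiv ψ)).symm
      rw [e2, Cardinal.mk_sigma]
      calc (Cardinal.sum fun gd : D => #{A : Set ℝ // ψ A = gd})
          ≤ Cardinal.sum (fun _ : D => 𝔠) := Cardinal.sum_le_sum _ _ (fun gd => hfib gd)
        _ = #D * 𝔠 := Cardinal.sum_const' _ _
    have h2c : (2 : Cardinal) ^ 𝔠 ≤ #D * 𝔠 := by
      have : #(Set ℝ) = (2 : Cardinal) ^ 𝔠 := by rw [Cardinal.mk_set, Cardinal.mk_real]
      rw [← this]
      exact hcount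
    rcases le_total (#D) 𝔠 with h | h
    · exfalso
      have : (2 : Cardinal) ^ 𝔠 ≤ 𝔠 := by
        refine h2c.trans ?_
        calc #D * 𝔠 ≤ 𝔠 * 𝔠 := mul_le_mul_left h _
          _ = 𝔠 := Cardinal.mul_eq_self Cardinal.aleph0_le_continuum
      exact absurd this (Cardinal.cantor 𝔠).2
    · refine h2c.trans ?_
      calc #D * 𝔠 ≤ #D * #D := mul_le_mul_right h _
        _ = #D := Cardinal.mul_eq_self (Cardinal.aleph0_le_continuum.trans h)
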